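/- For the group Γ₀(4) of integer matrices [[a,b],[c,d]] with ad−bc=1 and 4 | c, the three matrices A = [[1,1],[0,1]], B = [[3,−1],[4,−1]], C = [[−1,0],[0,−1]] generate Γ₀(4). -/

import Mathlib

open Matrix

private abbrev SL2' := Matrix.SpecialLinearGroup (Fin 2) ℤ
private def MA : SL2' := ⟨!![1, 1; 0, 1], by decide⟩
private def MB : SL2' := ⟨!![3, -1; 4, -1], by decide⟩
private def MC : SL2' := ⟨!![-1, 0; 0, -1], by decide⟩
private def MV : SL2' := ⟨!![1, 0; 4, 1], by decide⟩

private lemma coe_MA_zpow (n : ℤ) :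
    ((MA ^ n : SL2') : Matrix (Fin 2) (Fin 2) ℤ) = !![1, n; 0, 1] := by
  have h : MA = ModularGroup.T := by ext i j; fin_cases i <;> fin_cases j <;> rfl
  rw [h, ModularGroup.coe_T_zpow]

private lemma coe_MV_zpow (m : ℤ) :
    ((MV ^ m : SL2') : Matrix (Fin 2) (Fin 2) ℤ) = !![1, 0; 4*m, 1] := by
  induction m using Int.induction_on with
  | zero => ext i j; fin_cases i <;> fin_cases j <;> simp
  | succ n ih =>
      rw [_root_.zpow_add_one, Matrix.SpecialLinearGroup.coe_mul, ih]
      ext i j; fin_cases i <;> fin_cases j <;> simp [MV, mul_apply, Fin.sum_univ_two] <;> ring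
  | pred n ih =>
      rw [_root_.zpow_sub_one, Matrix.SpecialLinearGroup.coe_mul, ih, Matrix.SpecialLinearGroup.coe_inv]
      ext i j; fin_cases i <;> fin_cases j <;>
        simp [MV, mul_apply, Fin.sum_univ_two, SpecialLinearGroup.SL2_inv_expl, adjugate_fin_two] <;> ring

private lemma exists_step1 (a c : ℤ) (ha : a % 2 = 1) (hc4 : (4:ℤ) ∣ c) (hc : c ≠ 0) :
    ∃ n : ℤ, 2 * (a + n * c).natAbs < c.natAbs := by
  have hkpos : (0:ℤ) < |c| := abs_pos.mpr hc
  have h0 : 0 ≤ a % |c| := Int.emod_nonneg a (by positivity)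
  have h1 : a % |c| < |c| := Int.emod_lt_of_pos a hkpos
  have h2 : a % |c| % 2 = 1 := by
    rw [Int.emod_emod_of_dvd a ((dvd_abs 2 c).mpr (dvd_trans (by norm_num) hc4))]; exact ha
  have heq : a % |c| = a - |c| * (a / |c|) := Int.emod_def a |c|
  have habs : |c| = (c.natAbs : ℤ) := Int.abs_eq_natAbs c
  have h4 : (4:ℤ) ∣ |c| := (dvd_abs 4 c).mpr hc4
  rcases abs_cases c with ⟨hac, _⟩ | ⟨hac, _⟩
  · rcases le_or_gt (2 * (a % |c|)) |c| with h | h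
    · refine ⟨-(a / |c|), ?_⟩
      have e : a + -(a / |c|) * c = a % |c| := by rw [heq, hac]; ring
      rw [e]; omega
    · refine ⟨-(a / |c|) - 1, ?_⟩
      have e : a + (-(a / |c|) - 1) * c = a % |c| - |c| := by rw [heq, hac]; ring
      rw [e]; omega
  · rcases le_or_gt (2 * (a % |c|)) |c| with h | h
    · refine ⟨a / |c|, ?_⟩
      have e : a + (a / |c|) * c = a % |c| := by rw [heq, hac]; ring
      rw [e]; omega
    · refine ⟨a / |c| + 1, ?_⟩
      have e : a + (a / |c| + 1) * c = a % |c| - |c| := by rw [heq, hac]; ring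
      rw [e]; omega

private lemma exists_step2 (a c : ℤ) (ha : a ≠ 0) :
    ∃ m : ℤ, (4 * m * a + c).natAbs ≤ 2 * a.natAbs := by
  set k : ℤ := 4 * |a| with hk
  have hkpos : (0:ℤ) < k := by positivity
  have h0 : 0 ≤ c % k := Int.emod_nonneg c (by positivity)
  have h1 : c % k < k := Int.emod_lt_of_pos c hkpos
  have heq : c % k = c - k * (c / k) := Int.emod_def c k
  have habs : |a| = (a.natAbs : ℤ) := Int.abs_eq_natAbs a
  rcases abs_cases a with ⟨hac, _⟩ | ⟨hac, _⟩
  · rcases le_or_gt (2 * (c % k)) k with h | h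
    · refine ⟨-(c / k), ?_⟩
      have e : 4 * -(c / k) * a + c = c % k := by rw [heq, hk, hac]; ring
      rw [e]; omega
    · refine ⟨-(c / k) - 1, ?_⟩
      have e : 4 * (-(c / k) - 1) * a + c = c % k - k := by rw [heq, hk, hac]; ring
      rw [e]; omega
  · rcases le_or_gt (2 * (c % k)) k with h | h
    · refine ⟨c / k, ?_⟩
      have e : 4 * (c / k) * a + c = c % k := by rw [heq, hk, hac]; ring
      rw [e]; omega
    · refine ⟨c / k + 1, ?_⟩
      have e : 4 * (c / k + 1) * a + c = c % k - k := by rw [heq, hk, hac]; ring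
      rw [e]; omega

private lemma key (g : SL2') (hg : g ∈ CongruenceSubgroup.Gamma0 4) :
    g ∈ Subgroup.closure ({MA, MB, MC} : Set SL2') := by
  have hAmem : MA ∈ Subgroup.closure ({MA, MB, MC} : Set SL2') :=
    Subgroup.subset_closure (Set.mem_insert _ _)
  have hBmem : MB ∈ Subgroup.closure ({MA, MB, MC} : Set SL2') :=
    Subgroup.subset_closure (Set.mem_insert_of_mem _ (Set.mem_insert _ _))
  have hCmem : MC ∈ Subgroup.closure ({MA, MB, MC} : Set SL2') :=
    Subgroup.subset_closure (Set.mem_insert_of_mem _ (Set.mem_insert_of_mem _ rfl))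
  have hVeq : MV = MB⁻¹ * (MA * MC) := by
    rw [eq_inv_mul_iff_mul_eq]
    ext i j; rw [Matrix.SpecialLinearGroup.coe_mul, Matrix.SpecialLinearGroup.coe_mul]; fin_cases i <;> fin_cases j <;> simp [MA, MB, MC, MV, mul_apply, Fin.sum_univ_two]
  have hVmem : MV ∈ Subgroup.closure ({MA, MB, MC} : Set SL2') := by
    rw [hVeq]; exact mul_mem (inv_mem hBmem) (mul_mem hAmem hCmem)
  suffices H : ∀ N : ℕ, ∀ g : SL2', ((g : Matrix (Fin 2) (Fin 2) ℤ) 1 0).natAbs ≤ N →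
      g ∈ CongruenceSubgroup.Gamma0 4 → g ∈ Subgroup.closure ({MA, MB, MC} : Set SL2') from
    H _ g le_rfl hg
  intro N
  induction N using Nat.strong_induction_on with
  | _ N ih =>
    intro g hgN hg
    set a := (g : Matrix (Fin 2) (Fin 2) ℤ) 0 0 with ha
    set b := (g : Matrix (Fin 2) (Fin 2) ℤ) 0 1 with hb
    set c := (g : Matrix (Fin 2) (Fin 2) ℤ) 1 0 with hc
    set d := (g : Matrix (Fin 2) (Fin 2) ℤ) 1 1 with hd
    have hdet : a * d - b * c = 1 := by
      have := g.property
      rw [Matrix.det_fin_two] at this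
      exact this
    have hc4 : (4:ℤ) ∣ c := by
      rw [CongruenceSubgroup.Gamma0_mem] at hg
      exact_mod_cast (ZMod.intCast_zmod_eq_zero_iff_dvd c 4).mp hg
    obtain ⟨t, ht⟩ := hc4
    by_cases hc0 : c = 0
    · -- base case
      have had : a * d = 1 := by rw [hc0] at hdet; linarith
      rcases Int.mul_eq_one_iff_eq_one_or_neg_one.mp had with ⟨ha1, hd1⟩ | ⟨ha1, hd1⟩
      · have hgeq : g = MA ^ b := by
          ext i j
          rw [coe_MA_zpow]
          fin_cases i <;> fin_cases j <;> simp <;> omega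
        rw [hgeq]; exact zpow_mem hAmem b
      · have hgeq : g = MC * MA ^ (-b) := by
          ext i j
          rw [Matrix.SpecialLinearGroup.coe_mul, coe_MA_zpow]
          fin_cases i <;> fin_cases j <;>
            simp [MC, mul_apply, Fin.sum_univ_two] <;> omega
        rw [hgeq]; exact mul_mem hCmem (zpow_mem hAmem (-b))
    · -- inductive step
      have haodd : a % 2 = 1 := by
        have hodd : Odd (a * d) := ⟨2 * (b * t), by rw [ht] at hdet; linarith⟩
        exact Int.odd_iff.mp (Int.odd_mul.mp hodd).1
      obtain ⟨n, hn⟩ := exists_step1 a c haodd ⟨t, ht⟩ hc0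
      set a' := a + n * c with ha'
      have ha'odd : a' % 2 = 1 := by
        obtain ⟨s, hs⟩ : (2:ℤ) ∣ n * c := Dvd.dvd.mul_left (dvd_trans (by norm_num) ⟨t, ht⟩) n
        have : a' = a + 2 * s := by rw [ha', hs]
        omega
      have ha'0 : a' ≠ 0 := by omega
      obtain ⟨m, hm⟩ := exists_step2 a' c ha'0
      set g' := MV ^ m * (MA ^ n * g) with hg'def
      have hg'10 : (g' : Matrix (Fin 2) (Fin 2) ℤ) 1 0 = 4 * m * a' + c := by
        rw [hg'def, Matrix.SpecialLinearGroup.coe_mul, Matrix.SpecialLinearGroup.coe_mul,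
          coe_MV_zpow, coe_MA_zpow]
        simp [mul_apply, Fin.sum_univ_two, Matrix.vecMul, dotProduct,
          Matrix.vecHead, Matrix.vecTail, ← ha, ← hc, ha']
        try ring
      have hg'mem : g' ∈ CongruenceSubgroup.Gamma0 4 := by
        rw [CongruenceSubgroup.Gamma0_mem]
        have h0 : (((g' : Matrix (Fin 2) (Fin 2) ℤ) 1 0 : ℤ) : ZMod 4) = 0 := by
          rw [hg'10]
          exact (ZMod.intCast_zmod_eq_zero_iff_dvd _ 4).mpr
            (dvd_add ⟨m * a', by ring⟩ ⟨t, ht⟩)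
        exact h0
      have hlt : (4 * m * a' + c).natAbs < N :=
        lt_of_lt_of_le (lt_of_le_of_lt hm hn) hgN
      have hg'cl := ih _ hlt g' (le_of_eq (by rw [hg'10])) hg'mem
      have hgeq : g = MA ^ (-n) * (MV ^ (-m) * g') := by
        rw [hg'def]; group
      rw [hgeq]
      exact mul_mem (zpow_mem hAmem (-n)) (mul_mem (zpow_mem hVmem (-m)) hg'cl)

theorem gamma0_four_generators :
    Subgroup.closure
        ({⟨!![1, 1; 0, 1], by decide⟩, ⟨!![3, -1; 4, -1], by decide⟩,
          ⟨!![-1, 0; 0, -1], by decide⟩} :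
          Set (Matrix.SpecialLinearGroup (Fin 2) ℤ)) =
      CongruenceSubgroup.Gamma0 4 := by
  apply le_antisymm
  · rw [Subgroup.closure_le]
    rintro x hx
    rcases hx with rfl | rfl | rfl <;>
      · exact CongruenceSubgroup.Gamma0_mem.mpr (by decide)
  · intro g hg
    exact key g hg
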